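/- Let $\alpha \in [1,2]$. Define $\varphi(x) = (|x|^\alpha + |1-x|^\alpha - 1)/(|x|^{\alpha/2}|1-x|^{\alpha/2})$ for $x \in \mathbb{R} \setminus \{0,1\}$, with $\varphi(0)=\varphi(1)=0$. Then $\varphi$ is bounded on $\mathbb{R}$ with $|\varphi(x)| \leq 2$ for all $x$. -/
import Mathlib

open Real

/-- The symmetric coefficient function from the Leibniz lemma. -/
noncomputable def phiFun (α : ℝ) (x : ℝ) : ℝ :=
  if x = 0 ∨ x = 1 then 0
  else (|x| ^ α + |1 - x| ^ α - 1) / (|x| ^ (α / 2) * |1 - x| ^ (α / 2))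

lemma rpow_subadd {t u v : ℝ} (hu : 0 ≤ u) (hv : 0 ≤ v) (ht0 : 0 ≤ t) (ht1 : t ≤ 1) :
    (u + v) ^ t ≤ u ^ t + v ^ t := by
  lift u to NNReal using hu
  lift v to NNReal using hv
  exact_mod_cast NNReal.rpow_add_le_add_rpow u v ht0 ht1

theorem phi_bounded (α : ℝ) (hα : 1 ≤ α) (hα2 : α ≤ 2) (x : ℝ) :
    |phiFun α x| ≤ 2 := by
  unfold phiFun
  by_cases h : x = 0 ∨ x = 1
  · simp [h]
  rw [if_neg h]
  push_neg at h
  obtain ⟨h0, h1⟩ := h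
  have hx : 0 < |x| := abs_pos.2 h0
  have hy : 0 < |1 - x| := abs_pos.2 (sub_ne_zero.2 (Ne.symm h1))
  set t := α / 2 with ht
  have ht0 : 0 ≤ t := by rw [ht]; linarith
  have ht1 : t ≤ 1 := by rw [ht]; linarith
  set a := |x| ^ t with ha
  set b := |1 - x| ^ t with hb
  have hapos : 0 < a := Real.rpow_pos_of_pos hx t
  have hbpos : 0 < b := Real.rpow_pos_of_pos hy t
  have h2a : |x| ^ α = a * a := by
    rw [ha, ← Real.rpow_add hx, ht]; ring_nf
  have h2b : |1 - x| ^ α = b * b := by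
    rw [hb, ← Real.rpow_add hy, ht]; ring_nf
  have tri1 : |x| ≤ |1 - x| + 1 := by
    rcases abs_cases x with ⟨e, _⟩ | ⟨e, _⟩ <;>
      rcases abs_cases (1 - x) with ⟨e', _⟩ | ⟨e', _⟩ <;> linarith
  have tri2 : |1 - x| ≤ |x| + 1 := by
    rcases abs_cases x with ⟨e, _⟩ | ⟨e, _⟩ <;>
      rcases abs_cases (1 - x) with ⟨e', _⟩ | ⟨e', _⟩ <;> linarith
  have tri3 : 1 ≤ |x| + |1 - x| := by
    rcases abs_cases x with ⟨e, _⟩ | ⟨e, _⟩ <;>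
      rcases abs_cases (1 - x) with ⟨e', _⟩ | ⟨e', _⟩ <;> linarith
  have hab1 : a ≤ b + 1 := by
    calc a ≤ (|1 - x| + 1) ^ t :=
          Real.rpow_le_rpow (abs_nonneg x) tri1 ht0
      _ ≤ |1 - x| ^ t + 1 ^ t := rpow_subadd (abs_nonneg _) zero_le_one ht0 ht1
      _ = b + 1 := by rw [Real.one_rpow]
  have hba1 : b ≤ a + 1 := by
    calc b ≤ (|x| + 1) ^ t :=
          Real.rpow_le_rpow (abs_nonneg _) tri2 ht0
      _ ≤ |x| ^ t + 1 ^ t := rpow_subadd (abs_nonneg _) zero_le_one ht0 ht1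
      _ = a + 1 := by rw [Real.one_rpow]
  have hsum : 1 ≤ a + b := by
    calc (1 : ℝ) = 1 ^ t := (Real.one_rpow t).symm
      _ ≤ (|x| + |1 - x|) ^ t := Real.rpow_le_rpow zero_le_one tri3 ht0
      _ ≤ a + b := rpow_subadd (abs_nonneg _) (abs_nonneg _) ht0 ht1
  have hnum : |a * a + b * b - 1| ≤ 2 * (a * b) := by
    rw [abs_le]
    constructor
    · nlinarith [sq_nonneg (a + b)]
    · nlinarith [sq_nonneg (a - b)]
  rw [h2a, h2b, abs_div, abs_of_pos (mul_pos hapos hbpos),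
    div_le_iff₀ (mul_pos hapos hbpos)]
  linarith
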